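/- If a unit vector ψ ∈ ℂ^{2^n} is prepared by Clifford gates plus at most t Pauli-rotation gates, then the stabilizer dimension of ψ is at least n − t, i.e. log₂|stab(ψ)| ≥ n − t (equivalently |stab(ψ)| ≥ 2^{n−t}). -/

import Mathlib

open Matrix

noncomputable section

/-- The space of `n`-qubit operators (2^n × 2^n complex matrices, indexed by bit strings). -/
abbrev QMat (n : ℕ) := Matrix (Fin n → Fin 2) (Fin n → Fin 2) ℂ

/-- The space of `n`-qubit state vectors (ℂ^{2^n}, indexed by bit strings). -/
abbrev QVec (n : ℕ) := (Fin n → Fin 2) → ℂ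

def PauliX : Matrix (Fin 2) (Fin 2) ℂ := !![0, 1; 1, 0]
def PauliY : Matrix (Fin 2) (Fin 2) ℂ := !![0, -Complex.I; Complex.I, 0]
def PauliZ : Matrix (Fin 2) (Fin 2) ℂ := !![1, 0; 0, -1]

/-- `Q` is one of the four single-qubit Pauli matrices `I, X, Y, Z`. -/
def IsSingleQubitPauli (Q : Matrix (Fin 2) (Fin 2) ℂ) : Prop :=
  Q = 1 ∨ Q = PauliX ∨ Q = PauliY ∨ Q = PauliZ

/-- Kronecker product, in qubit order, of `n` single-qubit operators. -/
def tensorn (n : ℕ) (Q : Fin n → Matrix (Fin 2) (Fin 2) ℂ) : QMat n :=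
  fun x y => ∏ j, Q j (x j) (y j)

/-- `P` is an element of the `n`-qubit Pauli group: `P = i^ℓ · Q_1 ⊗ ⋯ ⊗ Q_n`. -/
def IsPauli {n : ℕ} (P : QMat n) : Prop :=
  ∃ (ℓ : Fin 4) (Q : Fin n → Matrix (Fin 2) (Fin 2) ℂ),
    (∀ j, IsSingleQubitPauli (Q j)) ∧ P = (Complex.I ^ (ℓ : ℕ)) • tensorn n Q

/-- Member of the `n`-qubit Clifford group: a unitary mapping Pauli operators to
Pauli operators under conjugation. -/
def IsClifford {n : ℕ} (U : QMat n) : Prop :=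
  U ∈ Matrix.unitaryGroup (Fin n → Fin 2) ℂ ∧ ∀ P : QMat n, IsPauli P → IsPauli (U * P * Uᴴ)

/-- A Pauli-rotation gate `exp(iθP)` with `θ ∈ ℝ` and `P` a Pauli operator. -/
def IsPauliRotation {n : ℕ} (R : QMat n) : Prop :=
  ∃ (θ : ℝ) (P : QMat n), IsPauli P ∧ R = NormedSpace.exp (((θ : ℂ) * Complex.I) • P)

/-- The first standard basis vector `e₀` of ℂ^{2^n} (the all-zeros bit string). -/
def e0 (n : ℕ) : QVec n := fun x => if x = (fun _ => 0) then 1 else 0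

/-- `ψ = C_s R_s ⋯ C_1 R_1 C_0 e₀` for some `s ≤ t`, where each `C_j` is Clifford and
each `R_j` is a Pauli-rotation gate: `ψ` is prepared by Clifford gates plus at most `t`
Pauli-rotation gates. -/
def PreparedBy {n : ℕ} (t : ℕ) (ψ : QVec n) : Prop :=
  ∃ s : ℕ, s ≤ t ∧ ∃ (C R : ℕ → QMat n) (v : ℕ → QVec n),
    (∀ j, j ≤ s → IsClifford (C j)) ∧
    (∀ j, 1 ≤ j → j ≤ s → IsPauliRotation (R j)) ∧
    v 0 = (C 0) *ᵥ (e0 n) ∧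
    (∀ j, j < s → v (j + 1) = (C (j + 1)) *ᵥ ((R (j + 1)) *ᵥ v j)) ∧
    ψ = v s

def pdec : Fin 4 → Matrix (Fin 2) (Fin 2) ℂ := ![1, PauliX, PauliY, PauliZ]
def pPh : Fin 4 → Fin 4 → Fin 4 := ![![0,0,0,0],![0,0,1,3],![0,3,0,1],![0,1,3,0]]
def pCd : Fin 4 → Fin 4 → Fin 4 := ![![0,1,2,3],![1,0,3,2],![2,3,0,1],![3,2,1,0]]

lemma pdec_isP (k : Fin 4) : IsSingleQubitPauli (pdec k) := by
  fin_cases k <;> simp [pdec, IsSingleQubitPauli]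

lemma isSQP_iff {Q} : IsSingleQubitPauli Q ↔ ∃ k : Fin 4, Q = pdec k := by
  constructor
  · rintro (h|h|h|h)
    exacts [⟨0, h⟩, ⟨1, h⟩, ⟨2, h⟩, ⟨3, h⟩]
  · rintro ⟨k, rfl⟩; exact pdec_isP k

lemma pdec_mul (k l : Fin 4) :
    pdec k * pdec l = (Complex.I ^ ((pPh k l : ℕ))) • pdec (pCd k l) := by
  fin_cases k <;> fin_cases l <;>
    simp [pdec, pPh, pCd, PauliX, PauliY, PauliZ, Matrix.one_fin_two, Matrix.mul_fin_two,
      Matrix.smul_of, Complex.ext_iff, pow_succ] <;>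
    norm_num [Matrix.smul_cons, Matrix.smul_empty, vecHead, vecTail, pow_succ, Complex.I_mul_I, Complex.ext_iff, show ((3:Fin 4):ℕ) = 3 from rfl]


lemma tensorn_mul {n} (Q P : Fin n → Matrix (Fin 2) (Fin 2) ℂ) :
    tensorn n Q * tensorn n P = tensorn n (fun j => Q j * P j) := by
  ext x y
  simp only [tensorn, Matrix.mul_apply]
  rw [Finset.prod_univ_sum]
  simp [Fintype.piFinset_univ, Finset.prod_mul_distrib]

lemma tensorn_smul {n} (c : Fin n → ℂ) (M : Fin n → Matrix (Fin 2) (Fin 2) ℂ) :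
    tensorn n (fun j => c j • M j) = (∏ j, c j) • tensorn n M := by
  ext x y
  simp [tensorn, Finset.prod_mul_distrib]

lemma tensorn_one {n} : tensorn n (fun _ => 1) = (1 : QMat n) := by
  ext x y
  by_cases h : x = y
  · subst h; simp [tensorn, Matrix.one_apply]
  · rw [tensorn, Matrix.one_apply_ne h]
    obtain ⟨j, hj⟩ := Function.ne_iff.mp h
    exact Finset.prod_eq_zero (Finset.mem_univ j) (Matrix.one_apply_ne hj)
lemma I_pow_mod (m : ℕ) : Complex.I ^ m = Complex.I ^ (m % 4) := by
  conv_lhs => rw [← Nat.div_add_mod m 4]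
  rw [pow_add, pow_mul, Complex.I_pow_four, one_pow, one_mul]

lemma IsPauli.one {n : ℕ} : IsPauli (1 : QMat n) := by
  refine ⟨0, fun _ => 1, fun j => Or.inl rfl, ?_⟩
  simp [tensorn_one]

lemma IsPauli.mul {n : ℕ} {P Q : QMat n} (hP : IsPauli P) (hQ : IsPauli Q) :
    IsPauli (P * Q) := by
  obtain ⟨a, A, hA, rfl⟩ := hP
  obtain ⟨b, B, hB, rfl⟩ := hQ
  have key : ∀ j, ∃ c : Fin 4, ∃ R, IsSingleQubitPauli R ∧
      A j * B j = (Complex.I ^ (c : ℕ)) • R := by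
    intro j
    obtain ⟨k, hk⟩ := isSQP_iff.mp (hA j)
    obtain ⟨l, hl⟩ := isSQP_iff.mp (hB j)
    exact ⟨pPh k l, pdec (pCd k l), pdec_isP _, by rw [hk, hl, pdec_mul]⟩
  choose c R hR hcR using key
  refine ⟨⟨((a : ℕ) + b + ∑ j, (c j : ℕ)) % 4, Nat.mod_lt _ (by norm_num)⟩, R, hR, ?_⟩
  rw [smul_mul_assoc, mul_smul_comm, smul_smul, tensorn_mul]
  have : (fun j => A j * B j) = fun j => (Complex.I ^ ((c j : ℕ))) • R j := by
    funext j; exact hcR j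
  rw [this, tensorn_smul, smul_smul]
  congr 1
  rw [Finset.prod_pow_eq_pow_sum, ← pow_add, ← pow_add]
  exact I_pow_mod _

lemma sqp_comm {Q P : Matrix (Fin 2) (Fin 2) ℂ} (hQ : IsSingleQubitPauli Q)
    (hP : IsSingleQubitPauli P) : Q * P = P * Q ∨ Q * P = -(P * Q) := by
  obtain ⟨k, rfl⟩ := isSQP_iff.mp hQ
  obtain ⟨l, rfl⟩ := isSQP_iff.mp hP
  rw [pdec_mul, pdec_mul]
  fin_cases k <;> fin_cases l <;>
    norm_num [pPh, pCd, pow_succ, Complex.I_mul_I, neg_smul, neg_neg,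
      show ((3:Fin 4):ℕ) = 3 from rfl]

lemma sqp_sq {Q : Matrix (Fin 2) (Fin 2) ℂ} (hQ : IsSingleQubitPauli Q) : Q * Q = 1 := by
  obtain ⟨k, rfl⟩ := isSQP_iff.mp hQ
  rw [pdec_mul]
  fin_cases k <;> norm_num [pPh, pCd, pdec]

lemma pauli_sq {n : ℕ} {P : QMat n} (hP : IsPauli P) : P * P = 1 ∨ P * P = -1 := by
  obtain ⟨a, A, hA, rfl⟩ := hP
  rw [smul_mul_assoc, mul_smul_comm, smul_smul, tensorn_mul]
  have : (fun j => A j * A j) = fun _ => (1 : Matrix (Fin 2) (Fin 2) ℂ) := by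
    funext j; exact sqp_sq (hA j)
  rw [this, tensorn_one, ← pow_add]
  have h4 : Complex.I ^ ((a : ℕ) + a) = 1 ∨ Complex.I ^ ((a : ℕ) + a) = -1 := by
    fin_cases a <;> norm_num [Complex.I_pow_four, pow_succ, Complex.I_mul_I]
  rcases h4 with h | h <;> rw [h] <;> simp

lemma pauli_comm_or_anticomm {n : ℕ} {P Q : QMat n} (hP : IsPauli P) (hQ : IsPauli Q) :
    P * Q = Q * P ∨ P * Q = -(Q * P) := by
  obtain ⟨a, A, hA, rfl⟩ := hP
  obtain ⟨b, B, hB, rfl⟩ := hQ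
  rw [smul_mul_assoc, mul_smul_comm, smul_smul, tensorn_mul,
    smul_mul_assoc, mul_smul_comm, smul_smul, tensorn_mul, mul_comm (Complex.I ^ (b:ℕ))]
  set s : Fin n → ℂ := fun j => if A j * B j = B j * A j then 1 else -1 with hs
  have hkey : (fun j => A j * B j) = fun j => s j • (B j * A j) := by
    funext j
    by_cases h : A j * B j = B j * A j
    · rw [show s j = 1 from if_pos h, one_smul]; exact h
    · rw [show s j = -1 from if_neg h, neg_one_smul]
      exact (sqp_comm (hA j) (hB j)).resolve_left h
  rw [hkey, tensorn_smul, smul_smul]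
  have hprod : (∏ j, s j) = 1 ∨ (∏ j, s j) = -1 := by
    refine Finset.prod_induction s (fun c => c = 1 ∨ c = -1) ?_ (Or.inl rfl) ?_
    · rintro x y (rfl | rfl) (rfl | rfl) <;> norm_num
    · intro j _
      by_cases h : A j * B j = B j * A j <;> simp [hs, h]
  rcases hprod with h | h
  · left; rw [h, mul_one]
  · right; rw [h]; simp [neg_smul, mul_neg_one]

def Stab {n : ℕ} (v : QVec n) : Set (QMat n) := {P | IsPauli P ∧ P *ᵥ v = v}

lemma pauli_set_finite (n : ℕ) : {P : QMat n | IsPauli P}.Finite := by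
  have hsub : {P : QMat n | IsPauli P} ⊆ Set.range
      (fun p : Fin 4 × (Fin n → Fin 4) =>
        (Complex.I ^ (p.1 : ℕ)) • tensorn n (fun j => pdec (p.2 j))) := by
    rintro P ⟨ℓ, Q, hQ, rfl⟩
    choose k hk using fun j => isSQP_iff.mp (hQ j)
    refine ⟨(ℓ, k), ?_⟩
    have : (fun j => pdec (k j)) = Q := by funext j; exact (hk j).symm
    simp only [this]
  exact (Set.finite_range _).subset hsub

lemma stab_finite {n : ℕ} (v : QVec n) : (Stab v).Finite :=
  (pauli_set_finite n).subset fun _ h => h.1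

lemma one_mem_stab {n : ℕ} (v : QVec n) : (1 : QMat n) ∈ Stab v :=
  ⟨IsPauli.one, Matrix.one_mulVec v⟩

lemma mul_mem_stab {n : ℕ} {v : QVec n} {P Q : QMat n} (hP : P ∈ Stab v) (hQ : Q ∈ Stab v) :
    P * Q ∈ Stab v := by
  refine ⟨hP.1.mul hQ.1, ?_⟩
  rw [← Matrix.mulVec_mulVec, hQ.2, hP.2]

lemma stab_nonempty_ncard {n : ℕ} (v : QVec n) : 1 ≤ (Stab v).ncard :=
  (Set.ncard_pos (stab_finite v)).mpr ⟨1, one_mem_stab v⟩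

lemma neg_one_ne_stab {n : ℕ} {v : QVec n} (hv : v ≠ 0) {Q : QMat n}
    (hQ : Q ∈ Stab v) (hsq : Q * Q = -1) : False := by
  have h1 : (Q * Q) *ᵥ v = v := by rw [← Matrix.mulVec_mulVec, hQ.2, hQ.2]
  rw [hsq] at h1
  have h2 : -v = v := by
    calc -v = -1 *ᵥ v := by rw [Matrix.neg_mulVec, Matrix.one_mulVec]
      _ = v := h1
  apply hv
  have h3 : (2 : ℂ) • v = 0 := by
    rw [two_smul]
    nth_rewrite 1 [← h2]
    simp
  simpa using (smul_eq_zero.mp h3).resolve_left (by norm_num)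

lemma halving {n : ℕ} {v : QVec n} (hv : v ≠ 0) {P : QMat n} (hP : IsPauli P) :
    (Stab v).ncard ≤ 2 * {Q | Q ∈ Stab v ∧ Q * P = P * Q}.ncard := by
  set A : Set (QMat n) := {Q | Q ∈ Stab v ∧ Q * P = P * Q} with hAdef
  set B : Set (QMat n) := {Q | Q ∈ Stab v ∧ ¬ (Q * P = P * Q)} with hBdef
  have hAfin : A.Finite := (stab_finite v).subset fun q h => h.1
  have hBfin : B.Finite := (stab_finite v).subset fun q h => h.1
  have hunion : Stab v = A ∪ B := by
    ext Q
    simp only [hAdef, hBdef, Set.mem_union, Set.mem_setOf_eq]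
    tauto
  have hdisj : Disjoint A B := by
    rw [Set.disjoint_left]
    rintro q ⟨_, h⟩ ⟨_, h'⟩
    exact h' h
  have hcard : (Stab v).ncard = A.ncard + B.ncard := by
    rw [hunion, Set.ncard_union_eq hdisj hAfin hBfin]
  rcases B.eq_empty_or_nonempty with hB | ⟨Q0, hQ0⟩
  · rw [hcard, hB, Set.ncard_empty]
    omega
  · have hQ0s : Q0 ∈ Stab v := hQ0.1
    have hQ0sq : Q0 * Q0 = 1 :=
      (pauli_sq hQ0s.1).resolve_right fun h => neg_one_ne_stab hv hQ0s h
    have hQ0a : Q0 * P = -(P * Q0) :=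
      (pauli_comm_or_anticomm hQ0s.1 hP).resolve_left hQ0.2
    have hmaps : ∀ Q ∈ B, Q0 * Q ∈ A := by
      rintro Q ⟨hQs, hQc⟩
      have hQa : Q * P = -(P * Q) := (pauli_comm_or_anticomm hQs.1 hP).resolve_left hQc
      refine ⟨mul_mem_stab hQ0s hQs, ?_⟩
      calc Q0 * Q * P = Q0 * (Q * P) := by rw [mul_assoc]
        _ = Q0 * (-(P * Q)) := by rw [hQa]
        _ = -(Q0 * P * Q) := by rw [mul_neg, mul_assoc]
        _ = -(-(P * Q0) * Q) := by rw [hQ0a]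
        _ = P * (Q0 * Q) := by rw [neg_mul, neg_neg, mul_assoc]
    have hinj : Set.InjOn (fun Q => Q0 * Q) B := by
      intro x _ y _ hxy
      simp only at hxy
      calc x = Q0 * Q0 * x := by rw [hQ0sq, one_mul]
        _ = Q0 * (Q0 * x) := by rw [mul_assoc]
        _ = Q0 * (Q0 * y) := by rw [hxy]
        _ = Q0 * Q0 * y := by rw [mul_assoc]
        _ = y := by rw [hQ0sq, one_mul]
    have hBA : B.ncard ≤ A.ncard := Set.ncard_le_ncard_of_injOn _ hmaps hinj hAfin
    omega

lemma stab_conj {n : ℕ} {C : QMat n} (hC : IsClifford C) (v : QVec n) :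
    (Stab v).ncard ≤ (Stab (C *ᵥ v)).ncard := by
  have h1 : Cᴴ * C = 1 := hC.1.1
  have h2 : C * Cᴴ = 1 := hC.1.2
  have hmaps : ∀ Q ∈ Stab v, C * Q * Cᴴ ∈ Stab (C *ᵥ v) := by
    rintro Q ⟨hQp, hQv⟩
    refine ⟨hC.2 Q hQp, ?_⟩
    rw [Matrix.mulVec_mulVec, mul_assoc, mul_assoc, h1, mul_one, ← Matrix.mulVec_mulVec, hQv]
  have hinj : Set.InjOn (fun Q => C * Q * Cᴴ) (Stab v) := by
    intro x _ y _ hxy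
    simp only at hxy
    calc x = (Cᴴ * C) * x * (Cᴴ * C) := by rw [h1, one_mul, mul_one]
      _ = Cᴴ * (C * x * Cᴴ) * C := by noncomm_ring
      _ = Cᴴ * (C * y * Cᴴ) * C := by rw [hxy]
      _ = (Cᴴ * C) * y * (Cᴴ * C) := by noncomm_ring
      _ = y := by rw [h1, one_mul, mul_one]
  exact Set.ncard_le_ncard_of_injOn _ hmaps hinj (stab_finite _)

lemma stab_rot {n : ℕ} {v : QVec n} (hv : v ≠ 0) {R : QMat n} (hR : IsPauliRotation R) :
    (Stab v).ncard ≤ 2 * (Stab (R *ᵥ v)).ncard := by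
  obtain ⟨θ, P, hP, rfl⟩ := hR
  refine (halving hv hP).trans (Nat.mul_le_mul_left 2 (Set.ncard_le_ncard ?_ (stab_finite _)))
  rintro Q ⟨hQs, hQc⟩
  have hcomm : Commute Q (NormedSpace.exp (((θ : ℂ) * Complex.I) • P)) :=
    (Commute.smul_right hQc (((θ : ℂ) * Complex.I))).exp_right
  refine ⟨hQs.1, ?_⟩
  rw [Matrix.mulVec_mulVec, hcomm.eq, ← Matrix.mulVec_mulVec, hQs.2]

lemma stab_e0 (n : ℕ) : 2 ^ n ≤ (Stab (e0 n)).ncard := by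
  set f : (Fin n → Fin 2) → QMat n :=
    fun z => tensorn n (fun j => if z j = 0 then 1 else PauliZ) with hf
  have hentry : ∀ (z : Fin n → Fin 2) (j : Fin n) (a : Fin 2),
      (if z j = 0 then (1 : Matrix (Fin 2) (Fin 2) ℂ) else PauliZ) a 0 =
        if a = 0 then 1 else 0 := by
    intro z j a
    by_cases h : z j = 0 <;> fin_cases a <;> simp [h, PauliZ, Matrix.one_apply]
  have hmaps : ∀ z, f z ∈ Stab (e0 n) := by
    intro z
    constructor
    · refine ⟨0, (fun j => if z j = 0 then (1 : Matrix (Fin 2) (Fin 2) ℂ) else PauliZ),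
        fun j => ?_, by rw [show ((0 : Fin 4) : ℕ) = 0 from rfl, pow_zero, one_smul]⟩
      by_cases h : z j = 0 <;> simp [h, IsSingleQubitPauli]
    · funext x
      have : (f z *ᵥ e0 n) x = f z x (fun _ => 0) := by
        simp [Matrix.mulVec, dotProduct, e0, mul_ite, mul_one, mul_zero]
      rw [this]
      show (∏ j, (if z j = 0 then (1 : Matrix (Fin 2) (Fin 2) ℂ) else PauliZ) (x j) 0) = e0 n x
      by_cases hx : x = fun _ => 0
      · subst hx; simp [e0, hentry]
      · obtain ⟨j, hj⟩ := Function.ne_iff.mp hx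
        rw [show e0 n x = 0 by simp [e0, hx]]
        refine Finset.prod_eq_zero (Finset.mem_univ j) ?_
        rw [hentry]
        simp [hj]
  have hinj : Function.Injective f := by
    intro z z' hzz
    by_contra hne
    obtain ⟨j, hj⟩ := Function.ne_iff.mp hne
    have := congrFun (congrFun hzz (fun k => if k = j then 1 else 0)) (fun k => if k = j then 1 else 0)
    rw [hf] at this
    simp only [tensorn] at this
    have heval : ∀ (w : Fin n → Fin 2),
        (∏ k, (if w k = 0 then (1 : Matrix (Fin 2) (Fin 2) ℂ) else PauliZ)
          ((if k = j then (1 : Fin 2) else 0)) ((if k = j then (1 : Fin 2) else 0))) =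
        if w j = 0 then 1 else -1 := by
      intro w
      rw [Finset.prod_eq_single j]
      · by_cases h : w j = 0 <;> simp [h, PauliZ, Matrix.one_apply]
      · intro k _ hk
        by_cases h : w k = 0 <;> simp [hk, h, PauliZ, Matrix.one_apply]
      · simp
    rw [heval z, heval z'] at this
    by_cases h : z j = 0 <;> by_cases h' : z' j = 0
    · exact hj (h.trans h'.symm)
    · rw [if_pos h, if_neg h'] at this; norm_num at this
    · rw [if_neg h, if_pos h'] at this; norm_num at this
    · have e1 : z j = 1 := by omega
      have e2 : z' j = 1 := by omega
      exact hj (e1.trans e2.symm)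
  calc 2 ^ n = (Set.univ : Set (Fin n → Fin 2)).ncard := by
        rw [Set.ncard_univ, Nat.card_eq_fintype_card]
        simp
    _ ≤ (Stab (e0 n)).ncard :=
        Set.ncard_le_ncard_of_injOn f (fun z _ => hmaps z) hinj.injOn (stab_finite _)

lemma e0_ne_zero (n : ℕ) : e0 n ≠ 0 := by
  intro h
  have := congrFun h (fun _ => 0)
  simp [e0] at this

lemma unitary_mulVec_ne_zero {n : ℕ} {C : QMat n}
    (hC : C ∈ Matrix.unitaryGroup (Fin n → Fin 2) ℂ) {v : QVec n} (hv : v ≠ 0) :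
    C *ᵥ v ≠ 0 := by
  intro h
  apply hv
  have h1 : Cᴴ * C = 1 := hC.1
  calc v = (Cᴴ * C) *ᵥ v := by rw [h1, Matrix.one_mulVec]
    _ = Cᴴ *ᵥ (C *ᵥ v) := by rw [Matrix.mulVec_mulVec]
    _ = 0 := by rw [h, Matrix.mulVec_zero]

lemma exp_mulVec_ne_zero {n : ℕ} (A : QMat n) {v : QVec n} (hv : v ≠ 0) :
    NormedSpace.exp A *ᵥ v ≠ 0 := by
  intro h
  apply hv
  have h1 : NormedSpace.exp (-A) * NormedSpace.exp A = 1 := by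
    rw [← Matrix.exp_add_of_commute (-A) A (Commute.refl A).neg_left, neg_add_cancel,
      NormedSpace.exp_zero]
  calc v = (NormedSpace.exp (-A) * NormedSpace.exp A) *ᵥ v := by
        rw [h1, Matrix.one_mulVec]
    _ = NormedSpace.exp (-A) *ᵥ (NormedSpace.exp A *ᵥ v) := by rw [Matrix.mulVec_mulVec]
    _ = 0 := by rw [h, Matrix.mulVec_zero]

theorem stab_dim_lower_bound' (n t : ℕ) (ψ : QVec n)
    (hprep : PreparedBy t ψ) :
    2 ^ (n - t) ≤ Nat.card {P : QMat n // IsPauli P ∧ P *ᵥ ψ = ψ} := by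
  obtain ⟨s, hst, C, R, v, hC, hR, hv0, hstep, hpsi⟩ := hprep
  have main : ∀ j, j ≤ s → (v j ≠ 0 ∧ 2 ^ n ≤ 2 ^ j * (Stab (v j)).ncard) := by
    intro j
    induction j with
    | zero =>
      intro _
      rw [hv0]
      constructor
      · exact unitary_mulVec_ne_zero (hC 0 (Nat.zero_le s)).1 (e0_ne_zero n)
      · rw [pow_zero, one_mul]
        exact (stab_e0 n).trans (stab_conj (hC 0 (Nat.zero_le s)) (e0 n))
    | succ k ih =>
      intro hks
      obtain ⟨hne, hb⟩ := ih (by omega)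
      have hstepk := hstep k (by omega)
      obtain ⟨θ, P, hP, hRform⟩ := hR (k + 1) (by omega) hks
      have hRne : R (k + 1) *ᵥ v k ≠ 0 := by
        rw [hRform]; exact exp_mulVec_ne_zero _ hne
      constructor
      · rw [hstepk]
        exact unitary_mulVec_ne_zero (hC (k + 1) hks).1 hRne
      · have h1 : (Stab (v k)).ncard ≤ 2 * (Stab (R (k + 1) *ᵥ v k)).ncard :=
          stab_rot hne ⟨θ, P, hP, hRform⟩
        have h2 : (Stab (R (k + 1) *ᵥ v k)).ncard ≤ (Stab (v (k + 1))).ncard := by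
          rw [hstepk]
          exact stab_conj (hC (k + 1) hks) _
        calc 2 ^ n ≤ 2 ^ k * (Stab (v k)).ncard := hb
          _ ≤ 2 ^ k * (2 * (Stab (v (k + 1))).ncard) :=
              Nat.mul_le_mul_left _ (h1.trans (Nat.mul_le_mul_left 2 h2))
          _ = 2 ^ (k + 1) * (Stab (v (k + 1))).ncard := by ring
  obtain ⟨hpne, hbound⟩ := main s le_rfl
  rw [← hpsi] at hpne hbound
  have hcardeq : Nat.card {P : QMat n // IsPauli P ∧ P *ᵥ ψ = ψ} = (Stab ψ).ncard :=
    Nat.card_coe_set_eq (Stab ψ)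
  rw [hcardeq]
  have hc1 : 1 ≤ (Stab ψ).ncard := stab_nonempty_ncard ψ
  have h2 : 2 ^ (n - s) ≤ (Stab ψ).ncard := by
    rcases le_or_gt s n with h | h
    · have hmul : 2 ^ s * 2 ^ (n - s) ≤ 2 ^ s * (Stab ψ).ncard := by
        rw [← pow_add, Nat.add_sub_cancel' h]
        exact hbound
      exact Nat.le_of_mul_le_mul_left hmul (Nat.pow_pos (n := s) (by norm_num))
    · simpa [Nat.sub_eq_zero_of_le h.le] using hc1
  exact le_trans (Nat.pow_le_pow_right (by norm_num) (Nat.sub_le_sub_left hst n)) h2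

/-- stabilizer-dimension bound: a state prepared by Clifford gates plus
at most `t` Pauli-rotation gates has stabilizer dimension at least `n - t`,
i.e. `|stab(ψ)| ≥ 2^{n-t}`. -/
theorem stab_dim_lower_bound (n t : ℕ) (ψ : QVec n) (hunit : star ψ ⬝ᵥ ψ = 1)
    (hprep : PreparedBy t ψ) :
    2 ^ (n - t) ≤ Nat.card {P : QMat n // IsPauli P ∧ P *ᵥ ψ = ψ} :=
  stab_dim_lower_bound' n t ψ hprep
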